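/- Let F be twice differentiable on an open interval containing [a,b] ⊆ [0,∞) with a < b, and suppose |F''| is (h-s)₂-convex on [a,b]. Then |(F'(a)+F'(b))/2 − (1/(b-a))·∫ₐᵇ F'(x) dx| ≤ ((b-a)/2)·(|F''(a)|+|F''(b)|)·∫₀¹ |1−2t|·h(t)^s dt, assuming t ↦ |1−2t|·h(t)^s is integrable and h(t)^s = h(1-t)^s-symmetry of the integral (i.e., ∫₀¹ |1−2t| h(t)^s dt = ∫₀¹ |1−2t| h(1−t)^s dt). -/

import Mathlib

open Set intervalIntegral

theorem trapezoid_ineq_hs2 (h : ℝ → ℝ) (s : ℝ) (F F' F'' : ℝ → ℝ) (I : Set ℝ) (a b : ℝ)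
    (hh_nonneg : ∀ t, 0 ≤ h t) (hh_ne : ∃ t, h t ≠ 0) (hs : s ∈ Ioc (0:ℝ) 1)
    (hI : IsOpen I) (ha : 0 ≤ a) (hab : a < b) (hsub : Icc a b ⊆ I)
    (hF' : ∀ x ∈ I, HasDerivAt F (F' x) x)
    (hF'' : ∀ x ∈ I, HasDerivAt F' (F'' x) x)
    (hint : IntervalIntegrable F'' MeasureTheory.volume a b)
    -- |F''| is (h-s)₂-convex on [a,b]
    (hconv : ∀ t ∈ Icc (0:ℝ) 1,
      |F'' (t * a + (1 - t) * b)| ≤ h t ^ s * |F'' a| + h (1 - t) ^ s * |F'' b|)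
    (hint2 : IntervalIntegrable (fun t => |1 - 2 * t| * h t ^ s) MeasureTheory.volume 0 1)
    (hsymm : ∫ t in (0:ℝ)..1, |1 - 2 * t| * h t ^ s
           = ∫ t in (0:ℝ)..1, |1 - 2 * t| * h (1 - t) ^ s) :
    |(F' a + F' b) / 2 - (1 / (b - a)) * ∫ x in a..b, F' x| ≤
      ((b - a) / 2) * (|F'' a| + |F'' b|) * ∫ t in (0:ℝ)..1, |1 - 2 * t| * h t ^ s := by
  have hba : b - a ≠ 0 := sub_ne_zero.2 hab.ne'
  have hc : a - b ≠ 0 := sub_ne_zero.2 hab.ne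
  -- the affine map t ↦ (a-b)t + b sends [0,1] into [a,b]
  have hmem : ∀ t ∈ Icc (0:ℝ) 1, (a - b) * t + b ∈ Icc a b := by
    intro t ht
    constructor <;> nlinarith [ht.1, ht.2, hab.le]
  have hmemI : ∀ t ∈ Icc (0:ℝ) 1, (a - b) * t + b ∈ I := fun t ht => hsub (hmem t ht)
  set v : ℝ → ℝ := fun t => F' ((a - b) * t + b) with hv_def
  have hv : ∀ t ∈ uIcc (0:ℝ) 1, HasDerivAt v (F'' ((a - b) * t + b) * (a - b)) t := by
    intro t ht
    rw [uIcc_of_le zero_le_one] at ht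
    have := (hF'' _ (hmemI t ht)).comp t
      (((hasDerivAt_id t).const_mul (a - b)).add_const b)
    rw [hv_def]; simpa [Function.comp_def] using this
  have hu : ∀ t ∈ uIcc (0:ℝ) 1, HasDerivAt (fun t : ℝ => 1 - 2 * t) (-2 : ℝ) t := by
    intro t _
    simpa using ((hasDerivAt_id t).const_mul (2:ℝ)).const_sub 1
  -- integrability of F'' ∘ affine on [0,1]
  have hF''int : IntervalIntegrable (fun t => F'' ((a - b) * t + b)) MeasureTheory.volume 0 1 := by
    have h1 : IntervalIntegrable (fun x => F'' (x + b)) MeasureTheory.volume (a - b) (b - b) :=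
      hint.comp_add_right b
    have h2 := h1.comp_mul_left (c := a - b)
    have : IntervalIntegrable (fun x => F'' ((a - b) * x + b)) MeasureTheory.volume
        ((a - b) / (a - b)) ((b - b) / (a - b)) := h2
    rw [div_self hc] at this
    simpa using this.symm
  have hv'int : IntervalIntegrable (fun t => F'' ((a - b) * t + b) * (a - b))
      MeasureTheory.volume 0 1 := hF''int.mul_const _
  have hu'int : IntervalIntegrable (fun _ : ℝ => (-2 : ℝ)) MeasureTheory.volume 0 1 :=
    intervalIntegrable_const
  -- v is continuous on [0,1]
  have hvcont : ContinuousOn v (uIcc (0:ℝ) 1) := fun t ht =>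
    (hv t ht).continuousAt.continuousWithinAt
  have hvint : IntervalIntegrable v MeasureTheory.volume 0 1 :=
    hvcont.intervalIntegrable
  -- integration by parts
  have hparts := intervalIntegral.integral_mul_deriv_eq_deriv_mul hu hv hu'int hv'int
  -- substitution for ∫ v
  have hsubst : (∫ t in (0:ℝ)..1, v t) = (1 / (b - a)) * ∫ x in a..b, F' x := by
    rw [hv_def]
    rw [intervalIntegral.integral_comp_mul_add F' hc b]
    have e1 : (a - b) * 0 + b = b := by ring
    have e2 : (a - b) * 1 + b = a := by ring
    rw [e1, e2, intervalIntegral.integral_symm a b]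
    simp [smul_eq_mul]
    field_simp
    ring
  set J : ℝ := ∫ t in (0:ℝ)..1, (1 - 2 * t) * F'' ((a - b) * t + b) with hJ_def
  have hJmul : ∫ t in (0:ℝ)..1, (1 - 2 * t) * (F'' ((a - b) * t + b) * (a - b))
      = J * (a - b) := by
    rw [hJ_def, ← intervalIntegral.integral_mul_const]
    congr 1; ext t; ring
  have hv1 : v 1 = F' a := by rw [hv_def]; norm_num
  have hv0 : v 0 = F' b := by rw [hv_def]; norm_num
  have hint3 : ∫ t in (0:ℝ)..1, (-2 : ℝ) * v t = (-2) * ∫ t in (0:ℝ)..1, v t := by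
    rw [intervalIntegral.integral_const_mul]
  -- key identity
  have key : (F' a + F' b) / 2 - (1 / (b - a)) * ∫ x in a..b, F' x = ((b - a) / 2) * J := by
    rw [hJmul, hint3, hv1, hv0, hsubst] at hparts
    have hba' : (b - a) ≠ 0 := hba
    field_simp at hparts ⊢
    nlinarith [hparts]
  rw [key]
  -- bound |J|
  have habsJ : |J| ≤ ∫ t in (0:ℝ)..1, |1 - 2 * t| * |F'' ((a - b) * t + b)| := by
    have := intervalIntegral.norm_integral_le_integral_norm
      (f := fun t => (1 - 2 * t) * F'' ((a - b) * t + b)) (μ := MeasureTheory.volume)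
      (zero_le_one)
    simpa [Real.norm_eq_abs, abs_mul] using this
  -- integrability of the two dominating pieces
  have hint2' : IntervalIntegrable (fun t => |1 - 2 * t| * h (1 - t) ^ s)
      MeasureTheory.volume 0 1 := by
    have h1 := (hint2.comp_sub_left 1).symm
    have : (fun x : ℝ => |1 - 2 * (1 - x)| * h (1 - x) ^ s)
        = fun x : ℝ => |1 - 2 * x| * h (1 - x) ^ s := by
      funext x
      congr 1
      rw [abs_sub_comm]
      congr 1; ring
    rw [this] at h1
    simpa using h1
  set g : ℝ → ℝ := fun t => |1 - 2 * t| * h t ^ s * |F'' a| + |1 - 2 * t| * h (1 - t) ^ s * |F'' b|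
    with hg_def
  have hgint : IntervalIntegrable g MeasureTheory.volume 0 1 :=
    (hint2.mul_const _).add (hint2'.mul_const _)
  have hfint : IntervalIntegrable (fun t => |1 - 2 * t| * |F'' ((a - b) * t + b)|)
      MeasureTheory.volume 0 1 := by
    have := (hF''int.continuousOn_mul
      (g := fun t : ℝ => 1 - 2 * t)
      ((by fun_prop : Continuous fun t : ℝ => 1 - 2 * t).continuousOn)).norm
    simpa [Real.norm_eq_abs, abs_mul] using this
  -- pointwise comparison
  have hmono : ∫ t in (0:ℝ)..1, |1 - 2 * t| * |F'' ((a - b) * t + b)|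
      ≤ ∫ t in (0:ℝ)..1, g t := by
    apply intervalIntegral.integral_mono_on zero_le_one hfint hgint
    intro t ht
    have hconv' := hconv t ht
    have heq : t * a + (1 - t) * b = (a - b) * t + b := by ring
    rw [heq] at hconv'
    rw [hg_def]
    have h1 : |1 - 2 * t| * |F'' ((a - b) * t + b)|
        ≤ |1 - 2 * t| * (h t ^ s * |F'' a| + h (1 - t) ^ s * |F'' b|) :=
      mul_le_mul_of_nonneg_left hconv' (abs_nonneg _)
    calc |1 - 2 * t| * |F'' ((a - b) * t + b)|
        ≤ |1 - 2 * t| * (h t ^ s * |F'' a| + h (1 - t) ^ s * |F'' b|) := h1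
      _ = |1 - 2 * t| * h t ^ s * |F'' a| + |1 - 2 * t| * h (1 - t) ^ s * |F'' b| := by ring
  -- compute ∫ g
  have hgval : ∫ t in (0:ℝ)..1, g t
      = (|F'' a| + |F'' b|) * ∫ t in (0:ℝ)..1, |1 - 2 * t| * h t ^ s := by
    rw [hg_def]
    rw [intervalIntegral.integral_add (hint2.mul_const _) (hint2'.mul_const _),
      intervalIntegral.integral_mul_const, intervalIntegral.integral_mul_const, ← hsymm]
    ring
  have hJle : |J| ≤ (|F'' a| + |F'' b|) * ∫ t in (0:ℝ)..1, |1 - 2 * t| * h t ^ s := by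
    calc |J| ≤ _ := habsJ
      _ ≤ ∫ t in (0:ℝ)..1, g t := hmono
      _ = _ := hgval
  have hba2 : (0:ℝ) ≤ (b - a) / 2 := by linarith
  calc |((b - a) / 2) * J| = ((b - a) / 2) * |J| := by
        rw [abs_mul, abs_of_nonneg hba2]
    _ ≤ ((b - a) / 2) * ((|F'' a| + |F'' b|) * ∫ t in (0:ℝ)..1, |1 - 2 * t| * h t ^ s) :=
        mul_le_mul_of_nonneg_left hJle hba2
    _ = ((b - a) / 2) * (|F'' a| + |F'' b|) * ∫ t in (0:ℝ)..1, |1 - 2 * t| * h t ^ s := by ring
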